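/- (Penultimate inequality in the proof of Theorem 1.) Assume each f_i is convex, P is μ-strongly convex with minimizer w* and optimal value P*, the δ-similarity condition holds, and 0 < η ≤ min(1/(8nL), 1/(8n²δ)). Fix permutations π and π' of {1,…,n}, a point w_prev ∈ ℝ^d and a vector v_prev ∈ ℝ^d. Run one SARAH epoch with step size η, permutation π, start point w_prev and initial direction v_prev, producing inner iterates w¹_prev,…,wⁿ_prev and epoch output w_cur; set v_cur = (1/n)·Σ_{i=1}^{n} ∇f_{π(i)}(wⁱ_prev). Run a second SARAH epoch with step size η, permutation π', start point w_cur and initial direction v_cur, producing epoch output w_next. Then P(w_next) − P* + (η(n+1)/16)·‖v_cur‖² ≤ P(w_cur) − P* − (η(n+1)/4)·‖∇P(w_cur)‖² + (1 − η·μ·(n+1)/2)·(η(n+1)/16)·‖v_prev‖². -/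

import Mathlib

open scoped BigOperators

open scoped RealInnerProductSpace


private lemma descent_lemma_aux {E : Type*} [NormedAddCommGroup E] [InnerProductSpace ℝ E] [CompleteSpace E]
    (φ : E → ℝ) (K : ℝ) (hK : 0 ≤ K) (hdiff : Differentiable ℝ φ)
    (hLip : ∀ a b, ‖gradient φ a - gradient φ b‖ ≤ K * ‖a - b‖) (x y : E) :
    φ y ≤ φ x + ⟪gradient φ x, y - x⟫ + K / 2 * ‖y - x‖ ^ 2 := by
  set c : ℝ → E := fun t => x + t • (y - x) with hc
  have hline : ∀ t : ℝ, HasDerivAt c (y - x) t := by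
    intro t
    simpa [hc] using ((hasDerivAt_id t).smul_const (y - x)).const_add x
  have hψ : ∀ t : ℝ, HasDerivAt (fun s => φ (c s)) ⟪gradient φ (c t), y - x⟫ t := by
    intro t
    have h1 : HasFDerivAt φ (InnerProductSpace.toDual ℝ E (gradient φ (c t))) (c t) :=
      ((hdiff (c t)).hasGradientAt).hasFDerivAt
    have h2 : HasDerivAt (fun s => φ (c s))
        (InnerProductSpace.toDual ℝ E (gradient φ (c t)) (y - x)) t :=
      h1.comp_hasDerivAt t (hline t)
    rw [InnerProductSpace.toDual_apply_apply] at h2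
    exact h2
  have hgc : Continuous (fun z => gradient φ z) := by
    have : LipschitzWith (Real.toNNReal K) (fun z => gradient φ z) := by
      apply LipschitzWith.of_dist_le_mul
      intro a b
      simpa [dist_eq_norm, Real.coe_toNNReal K hK] using hLip a b
    exact this.continuous
  have hcc : Continuous c := continuous_const.add (continuous_id.smul continuous_const)
  have hgcont : Continuous (fun t : ℝ => ⟪gradient φ (c t), y - x⟫) :=
    (hgc.comp hcc).inner continuous_const
  have hftc : φ (c 1) - φ (c 0) = ∫ t in (0:ℝ)..1, ⟪gradient φ (c t), y - x⟫ :=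
    (intervalIntegral.integral_eq_sub_of_hasDerivAt (fun t _ => hψ t)
      (hgcont.intervalIntegrable 0 1)).symm
  have hc0 : c 0 = x := by simp [hc]
  have hc1 : c 1 = y := by simp [hc]
  set C : ℝ := ⟪gradient φ x, y - x⟫ with hC
  set M : ℝ := K * ‖y - x‖ ^ 2 with hM
  have hg2c : Continuous (fun t : ℝ => C + t * M) := by continuity
  have hmono : (∫ t in (0:ℝ)..1, ⟪gradient φ (c t), y - x⟫)
      ≤ ∫ t in (0:ℝ)..1, (C + t * M) := by
    apply intervalIntegral.integral_mono_on (by norm_num)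
      (hgcont.intervalIntegrable 0 1) (hg2c.intervalIntegrable 0 1)
    intro t ht
    have h1 : ⟪gradient φ (c t), y - x⟫ - C
        = ⟪gradient φ (c t) - gradient φ x, y - x⟫ := by rw [hC, inner_sub_left]
    have h2 : ⟪gradient φ (c t) - gradient φ x, y - x⟫
        ≤ ‖gradient φ (c t) - gradient φ x‖ * ‖y - x‖ := real_inner_le_norm _ _
    have h3 : ‖gradient φ (c t) - gradient φ x‖ * ‖y - x‖ ≤ (K * ‖c t - x‖) * ‖y - x‖ :=
      mul_le_mul_of_nonneg_right (hLip _ _) (norm_nonneg _)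
    have h4 : ‖c t - x‖ = t * ‖y - x‖ := by
      simp [hc, norm_smul, abs_of_nonneg ht.1]
    rw [h4] at h3
    rw [hM]
    nlinarith [h1, h2, h3]
  have hval : (∫ t in (0:ℝ)..1, (C + t * M)) = C + M / 2 := by
    open intervalIntegral in
    rw [integral_add intervalIntegrable_const (intervalIntegrable_id.mul_const M),
      integral_mul_const, integral_id, integral_const]
    simp only [smul_eq_mul]
    ring
  rw [hc0, hc1] at hftc
  have : φ y ≤ φ x + (C + M / 2) := by
    rw [← hval]; linarith [hftc, hmono]
  rw [hC, hM] at this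
  linarith [this]


private lemma sarah_sum_bound {E : Type*} [NormedAddCommGroup E]
    (n : ℕ) (c : ℝ) (hc : 0 ≤ c) (hcn : c * n ≤ 1/8) (V : ℕ → E)
    (hstep : ∀ i < n, ‖V (i+1) - V i‖ ≤ c * ‖V i‖) :
    (∀ i, i ≤ n + 1 → ∑ j ∈ Finset.range i, ‖V j‖ ≤ (8/7) * i * ‖V 0‖) ∧
    (∀ i, i ≤ n → ‖V i‖ ≤ (8/7) * ‖V 0‖) ∧
    (∀ i, i ≤ n → ‖V i - V 0‖ ≤ (1/7) * ‖V 0‖) := by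
  have key : ∀ i, i ≤ n → ‖V i‖ ≤ ‖V 0‖ + c * ∑ j ∈ Finset.range i, ‖V j‖ := by
    intro i
    induction i with
    | zero => intro _; simp
    | succ i ih =>
      intro hi
      have hi' : i < n := hi
      have h1 : ‖V (i+1)‖ ≤ ‖V i‖ + c * ‖V i‖ := by
        have := hstep i hi'
        have h2 : ‖V (i+1)‖ ≤ ‖V i‖ + ‖V (i+1) - V i‖ := by
          have := norm_add_le (V i) (V (i+1) - V i); simpa using this
        linarith
      have h3 := ih (le_of_lt hi')
      rw [Finset.sum_range_succ]
      have h4 : 0 ≤ ‖V i‖ := norm_nonneg _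
      nlinarith
  have Sb : ∀ i, i ≤ n + 1 → ∑ j ∈ Finset.range i, ‖V j‖ ≤ (8/7) * i * ‖V 0‖ := by
    intro i
    induction i with
    | zero => intro _; simp
    | succ i ih =>
      intro hi
      have hi' : i ≤ n := Nat.lt_succ_iff.mp hi
      have h3 := ih (le_trans hi' (Nat.le_succ n))
      have h1 := key i hi'
      rw [Finset.sum_range_succ]
      have hin : (i : ℝ) ≤ n := by exact_mod_cast hi'
      have h0 : (0:ℝ) ≤ ‖V 0‖ := norm_nonneg _
      have hci : c * i ≤ 1/8 := by nlinarith
      have hcS : c * ∑ j ∈ Finset.range i, ‖V j‖ ≤ c * ((8/7) * i * ‖V 0‖) :=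
        mul_le_mul_of_nonneg_left h3 hc
      push_cast
      nlinarith
  refine ⟨Sb, ?_, ?_⟩
  · intro i hi
    have h1 := key i hi
    have h3 := Sb i (le_trans hi (Nat.le_succ n))
    have hin : (i : ℝ) ≤ n := by exact_mod_cast hi
    have h0 : (0:ℝ) ≤ ‖V 0‖ := norm_nonneg _
    have hci : c * i ≤ 1/8 := by nlinarith
    have hcS : c * ∑ j ∈ Finset.range i, ‖V j‖ ≤ c * ((8/7) * i * ‖V 0‖) :=
      mul_le_mul_of_nonneg_left h3 hc
    have h5 := mul_le_mul_of_nonneg_right hci h0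
    nlinarith
  · intro i hi
    have tele : ∀ i, i ≤ n → ‖V i - V 0‖ ≤ c * ∑ j ∈ Finset.range i, ‖V j‖ := by
      intro i
      induction i with
      | zero => intro _; simp
      | succ i ih =>
        intro hi
        have hi' : i < n := hi
        have h2 : ‖V (i+1) - V 0‖ ≤ ‖V i - V 0‖ + ‖V (i+1) - V i‖ := by
          have := norm_add_le (V i - V 0) (V (i+1) - V i); simpa using this
        have h3 := ih (le_of_lt hi')
        have h4 := hstep i hi'
        rw [Finset.sum_range_succ]
        linarith [mul_le_mul_of_nonneg_left (le_refl ‖V i‖) hc]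
    have h1 := tele i hi
    have h3 := Sb i (le_trans hi (Nat.le_succ n))
    have hin : (i : ℝ) ≤ n := by exact_mod_cast hi
    have h0 : (0:ℝ) ≤ ‖V 0‖ := norm_nonneg _
    have hcS : c * ∑ j ∈ Finset.range i, ‖V j‖ ≤ c * ((8/7) * i * ‖V 0‖) :=
      mul_le_mul_of_nonneg_left h3 hc
    have hci : c * i ≤ 1/8 := by nlinarith
    have h5 := mul_le_mul_of_nonneg_right hci h0
    nlinarith

set_option maxHeartbeats 1000000 in
private lemma sarah_epoch_descent {E : Type*} [NormedAddCommGroup E] [InnerProductSpace ℝ E]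
    (n : ℕ) (hn : 1 ≤ n) (η L δ : ℝ) (hη0 : 0 < η) (hL : 0 < L) (hδ : 0 < δ)
    (hηL : η * L * n ≤ 1/8) (hηδ : η * δ * n ≤ 1/8)
    (P : E → ℝ) (gP : E → E)
    (hdesc : ∀ x y : E, P y ≤ P x + ⟪gP x, y - x⟫ + L/2 * ‖y - x‖^2)
    (hPLip : ∀ a b : E, ‖gP a - gP b‖ ≤ L * ‖a - b‖)
    (W V : ℕ → E)
    (hWrec : ∀ i, i ≤ n → W (i+1) = W i - η • V i)
    (hVLip : ∀ i, i < n → ‖V (i+1) - V i‖ ≤ L * ‖W (i+1) - W i‖)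
    (hVsim : ∀ i, i < n →
      ‖(V (i+1) - V i) - (gP (W (i+1)) - gP (W i))‖ ≤ (δ/2) * ‖W (i+1) - W i‖) :
    P (W (n+1)) ≤ P (W 0) - (η * ((n:ℝ)+1)/4) * ‖gP (W 0)‖^2
      - (15/49) * (η * ((n:ℝ)+1)) * ‖V 0‖^2 + (η * ((n:ℝ)+1)) * ‖V 0 - gP (W 0)‖^2 := by
  have hG0 : (0:ℝ) ≤ ‖V 0‖ := norm_nonneg _
  have hA0 : (0:ℝ) ≤ ‖gP (W 0)‖ := norm_nonneg _
  have hE00 : (0:ℝ) ≤ ‖V 0 - gP (W 0)‖ := norm_nonneg _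
  have hn1 : (1:ℝ) ≤ (n:ℝ) := by exact_mod_cast hn
  have hηL1 : η * L ≤ 1/8 := by nlinarith [mul_pos hη0 hL]
  have hWd : ∀ i, i ≤ n → W (i+1) - W i = -(η • V i) := by
    intro i hi; rw [hWrec i hi]; abel
  have hWn : ∀ i, i ≤ n → ‖W (i+1) - W i‖ = η * ‖V i‖ := by
    intro i hi; rw [hWd i hi, norm_neg, norm_smul, Real.norm_eq_abs, abs_of_pos hη0]
  have hstep : ∀ i, i < n → ‖V (i+1) - V i‖ ≤ (η * L) * ‖V i‖ := by
    intro i hi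
    calc ‖V (i+1) - V i‖ ≤ L * ‖W (i+1) - W i‖ := hVLip i hi
    _ = (η * L) * ‖V i‖ := by rw [hWn i (le_of_lt hi)]; ring
  obtain ⟨Sb, vb, db⟩ := sarah_sum_bound n (η * L) (by positivity) hηL V hstep
  have Wdrift : ∀ i, i ≤ n → ‖W i - W 0‖ ≤ η * ∑ j ∈ Finset.range i, ‖V j‖ := by
    intro i
    induction i with
    | zero => intro _; simp
    | succ i ih =>
      intro hi
      have hi' : i ≤ n := le_of_lt hi
      have e1 : W (i+1) - W 0 = (W i - W 0) + (W (i+1) - W i) := by abel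
      rw [e1]
      calc ‖(W i - W 0) + (W (i+1) - W i)‖ ≤ ‖W i - W 0‖ + ‖W (i+1) - W i‖ := norm_add_le _ _
      _ ≤ η * ∑ j ∈ Finset.range i, ‖V j‖ + η * ‖V i‖ := by
          have := hWn i hi'; rw [this]; linarith [ih hi']
      _ = η * ∑ j ∈ Finset.range (i+1), ‖V j‖ := by rw [Finset.sum_range_succ]; ring
  have Wdrift2 : ∀ i, i ≤ n → ‖W i - W 0‖ ≤ (8/7) * (η * (n:ℝ)) * ‖V 0‖ := by
    intro i hi
    have h1 := Wdrift i hi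
    have h2 := Sb i (le_trans hi (Nat.le_succ n))
    have hin : (i:ℝ) ≤ n := by exact_mod_cast hi
    have h4 := mul_le_mul_of_nonneg_left h2 hη0.le
    have h5 := mul_le_mul_of_nonneg_right (mul_le_mul_of_nonneg_left hin hη0.le) hG0
    nlinarith
  have gPb : ∀ i, i ≤ n → ‖gP (W 0)‖ ≤ ‖gP (W i)‖ + (1/7) * ‖V 0‖ := by
    intro i hi
    have h1 : ‖gP (W 0)‖ - ‖gP (W i)‖ ≤ ‖gP (W 0) - gP (W i)‖ := by
      have := norm_sub_norm_le (gP (W 0)) (gP (W i)); linarith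
    have h2 : ‖gP (W 0) - gP (W i)‖ ≤ L * ‖W 0 - W i‖ := hPLip _ _
    rw [norm_sub_rev (W 0) (W i)] at h2
    have h5 : L * ‖W i - W 0‖ ≤ L * ((8/7) * (η * (n:ℝ)) * ‖V 0‖) :=
      mul_le_mul_of_nonneg_left (Wdrift2 i hi) hL.le
    have h6 : L * ((8/7) * (η * (n:ℝ)) * ‖V 0‖) ≤ (1/7) * ‖V 0‖ := by
      nlinarith [mul_le_mul_of_nonneg_right hηL hG0]
    linarith
  have Vlow : ∀ i, i ≤ n → (6/7) * ‖V 0‖ ≤ ‖V i‖ := by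
    intro i hi
    have h1 := db i hi
    have h2 : ‖V 0‖ - ‖V i‖ ≤ ‖V i - V 0‖ := by
      have := norm_sub_norm_le (V 0) (V i)
      rw [norm_sub_rev] at this; linarith
    linarith
  have ebnd : ∀ i, i ≤ n →
      ‖V i - gP (W i)‖ ≤ ‖V 0 - gP (W 0)‖ + (η * δ * (i:ℝ)) * ((4/7) * ‖V 0‖) := by
    intro i
    induction i with
    | zero => intro _; simp
    | succ i ih =>
      intro hi
      have hi' : i < n := hi
      have e1 : V (i+1) - gP (W (i+1))
          = (V i - gP (W i)) + ((V (i+1) - V i) - (gP (W (i+1)) - gP (W i))) := by abel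
      have h2 := hVsim i hi'
      rw [hWn i (le_of_lt hi')] at h2
      have h3 : ‖V i‖ ≤ (8/7) * ‖V 0‖ := vb i (le_of_lt hi')
      have h4 := ih (le_of_lt hi')
      have h5 : (δ/2) * (η * ‖V i‖) ≤ (δ/2) * (η * ((8/7) * ‖V 0‖)) :=
        mul_le_mul_of_nonneg_left (mul_le_mul_of_nonneg_left h3 hη0.le) (by positivity)
      rw [e1]
      calc ‖(V i - gP (W i)) + ((V (i+1) - V i) - (gP (W (i+1)) - gP (W i)))‖
          ≤ ‖V i - gP (W i)‖ + ‖(V (i+1) - V i) - (gP (W (i+1)) - gP (W i))‖ := norm_add_le _ _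
      _ ≤ ‖V 0 - gP (W 0)‖ + (η * δ * ((i:ℝ)+1)) * ((4/7) * ‖V 0‖) := by linarith
      _ = ‖V 0 - gP (W 0)‖ + (η * δ * ((i+1 : ℕ):ℝ)) * ((4/7) * ‖V 0‖) := by push_cast; ring
  have ebnd2 : ∀ i, i ≤ n → ‖V i - gP (W i)‖ ≤ ‖V 0 - gP (W 0)‖ + (1/14) * ‖V 0‖ := by
    intro i hi
    have h1 := ebnd i hi
    have hin : (i:ℝ) ≤ n := by exact_mod_cast hi
    have h2 : η * δ * (i:ℝ) ≤ 1/8 := by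
      have := mul_le_mul_of_nonneg_left hin (le_of_lt (mul_pos hη0 hδ))
      nlinarith
    have h3 : (η * δ * (i:ℝ)) * ((4/7) * ‖V 0‖) ≤ (1/8) * ((4/7) * ‖V 0‖) :=
      mul_le_mul_of_nonneg_right h2 (by positivity)
    linarith
  have hps : ∀ i, i ≤ n → P (W (i+1)) ≤ P (W i)
      - (η/4) * ‖gP (W 0)‖^2 - (15/49) * η * ‖V 0‖^2 + η * ‖V 0 - gP (W 0)‖^2 := by
    intro i hi
    have h1 := hdesc (W i) (W (i+1))
    rw [hWd i hi] at h1
    rw [inner_neg_right, real_inner_smul_right] at h1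
    have hnrm : ‖-(η • V i)‖^2 = η^2 * ‖V i‖^2 := by
      rw [norm_neg, norm_smul, Real.norm_eq_abs, abs_of_pos hη0, mul_pow]
    rw [hnrm] at h1
    have hinner : ⟪gP (W i), V i⟫
        = (‖gP (W i)‖^2 + ‖V i‖^2 - ‖V i - gP (W i)‖^2)/2 := by
      have hsq := norm_sub_sq_real (V i) (gP (W i))
      have hcomm : ⟪V i, gP (W i)⟫ = ⟪gP (W i), V i⟫ := real_inner_comm _ _
      rw [hcomm] at hsq
      linarith
    rw [hinner] at h1
    have hX0 : (0:ℝ) ≤ ‖gP (W i)‖ := norm_nonneg _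
    have hY0 : (0:ℝ) ≤ ‖V i‖ := norm_nonneg _
    have hZ0 : (0:ℝ) ≤ ‖V i - gP (W i)‖ := norm_nonneg _
    have bA := gPb i hi
    have bY1 := Vlow i hi
    have bZ := ebnd2 i hi
    have core : -((‖gP (W i)‖^2 + ‖V i‖^2 - ‖V i - gP (W i)‖^2)/2) + (L * η/2) * ‖V i‖^2
        ≤ -(1/4) * ‖gP (W 0)‖^2 - (15/49) * ‖V 0‖^2 + ‖V 0 - gP (W 0)‖^2 := by
      have hA2 : ‖gP (W 0)‖^2 ≤ 2 * ‖gP (W i)‖^2 + (2/49) * ‖V 0‖^2 := by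
        nlinarith [sq_nonneg (‖gP (W i)‖ - (1/7) * ‖V 0‖)]
      have hZ2 : ‖V i - gP (W i)‖^2
          ≤ 2 * ‖V 0 - gP (W 0)‖^2 + (1/98) * ‖V 0‖^2 := by
        nlinarith [sq_nonneg (‖V 0 - gP (W 0)‖ - (1/14) * ‖V 0‖)]
      have hY2 : (36/49) * ‖V 0‖^2 ≤ ‖V i‖^2 := by nlinarith
      have hT3 : (L * η/2) * ‖V i‖^2 ≤ (1/16) * ‖V i‖^2 := by nlinarith [sq_nonneg ‖V i‖]
      linarith
    have hfinal := mul_le_mul_of_nonneg_left core hη0.le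
    linarith [h1, hfinal]
  have hsum : ∀ i, i ≤ n + 1 → P (W i) ≤ P (W 0)
      + (i:ℝ) * (-(η/4) * ‖gP (W 0)‖^2 - (15/49) * η * ‖V 0‖^2
        + η * ‖V 0 - gP (W 0)‖^2) := by
    intro i
    induction i with
    | zero => intro _; simp
    | succ i ih =>
      intro hi
      have hi' : i ≤ n := Nat.lt_succ_iff.mp hi
      have h1 := hps i hi'
      have h2 := ih (le_trans hi' (Nat.le_succ n))
      push_cast
      nlinarith
  have hfin := hsum (n+1) (le_refl _)
  push_cast at hfin
  nlinarith [hfin]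

set_option maxHeartbeats 1000000 in
/-- Penultimate inequality in the proof of Theorem 1. -/
theorem shuffled_sarah_penultimate_inequality
    {d n : ℕ} (hd : 1 ≤ d) (hn : 1 ≤ n)
    (f : Fin n → EuclideanSpace ℝ (Fin d) → ℝ)
    (P : EuclideanSpace ℝ (Fin d) → ℝ)
    (hP : ∀ w, P w = (1 / (n : ℝ)) * ∑ i, f i w)
    (L μ δ η : ℝ) (hL : 0 < L) (hμ : 0 < μ) (hδ : 0 < δ)
    (hdiff : ∀ i, Differentiable ℝ (f i))
    (hconv : ∀ i, ConvexOn ℝ Set.univ (f i))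
    (hLip : ∀ i w₁ w₂, ‖gradient (f i) w₁ - gradient (f i) w₂‖ ≤ L * ‖w₁ - w₂‖)
    (hsc : StrongConvexOn Set.univ μ P)
    (wstar : EuclideanSpace ℝ (Fin d)) (hmin : IsMinOn P Set.univ wstar)
    (Pstar : ℝ) (hPstar : Pstar = P wstar)
    (hsim : ∀ i w₁ w₂,
      ‖(gradient (f i) w₁ - gradient P w₁) - (gradient (f i) w₂ - gradient P w₂)‖
        ≤ (δ / 2) * ‖w₁ - w₂‖)
    (hη0 : 0 < η)
    (hη : η ≤ min (1 / (8 * n * L)) (1 / (8 * n ^ 2 * δ)))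
    (π π' : Equiv.Perm (Fin n))
    (wprev vprev : EuclideanSpace ℝ (Fin d))
    -- first epoch: start point `wprev`, initial direction `vprev`, permutation `π`
    (W V : ℕ → EuclideanSpace ℝ (Fin d))
    (hW0 : W 0 = wprev) (hV0 : V 0 = vprev)
    (hWrec : ∀ i : Fin n, W ((i : ℕ) + 1) = W i - η • V i)
    (hVrec : ∀ i : Fin n, V ((i : ℕ) + 1)
      = V i + gradient (f (π i)) (W ((i : ℕ) + 1)) - gradient (f (π i)) (W i))
    (wcur : EuclideanSpace ℝ (Fin d)) (hwcur : wcur = W n - η • V n)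
    (vcur : EuclideanSpace ℝ (Fin d))
    (hvcur : vcur = (1 / (n : ℝ)) • ∑ i : Fin n, gradient (f (π i)) (W ((i : ℕ) + 1)))
    -- second epoch: start point `wcur`, initial direction `vcur`, permutation `π'`
    (W' V' : ℕ → EuclideanSpace ℝ (Fin d))
    (hW'0 : W' 0 = wcur) (hV'0 : V' 0 = vcur)
    (hW'rec : ∀ i : Fin n, W' ((i : ℕ) + 1) = W' i - η • V' i)
    (hV'rec : ∀ i : Fin n, V' ((i : ℕ) + 1)
      = V' i + gradient (f (π' i)) (W' ((i : ℕ) + 1)) - gradient (f (π' i)) (W' i))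
    (wnext : EuclideanSpace ℝ (Fin d)) (hwnext : wnext = W' n - η • V' n) :
    P wnext - Pstar + (η * ((n : ℝ) + 1) / 16) * ‖vcur‖ ^ 2
      ≤ P wcur - Pstar - (η * ((n : ℝ) + 1) / 4) * ‖gradient P wcur‖ ^ 2
        + (1 - η * μ * ((n : ℝ) + 1) / 2) * (η * ((n : ℝ) + 1) / 16) * ‖vprev‖ ^ 2 := by
  have hn0 : (0:ℝ) < (n:ℝ) := by exact_mod_cast hn
  have hn1 : (1:ℝ) ≤ (n:ℝ) := by exact_mod_cast hn
  -- step size bounds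
  have hηL : η * L * (n:ℝ) ≤ 1/8 := by
    have h1 : η ≤ 1 / (8 * n * L) := le_trans hη (min_le_left _ _)
    have h2 : (0:ℝ) < 8 * n * L := by positivity
    rw [le_div_iff₀ h2] at h1
    nlinarith
  have hηδ : η * δ * (n:ℝ) ≤ 1/8 := by
    have h1 : η ≤ 1 / (8 * n ^ 2 * δ) := le_trans hη (min_le_right _ _)
    have h2 : (0:ℝ) < 8 * n ^ 2 * δ := by positivity
    rw [le_div_iff₀ h2] at h1
    have h3 : η * δ * ((n:ℝ) * n) ≤ 1/8 := by nlinarith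
    nlinarith [mul_pos hη0 hδ, mul_pos (mul_pos hη0 hδ) hn0]
  have hηL1 : η * L ≤ 1/8 := by nlinarith [mul_pos hη0 hL]
  -- gradient of P
  have hgradP : ∀ w, HasGradientAt P ((1 / (n : ℝ)) • ∑ i, gradient (f i) w) w := by
    intro w
    have hsum : HasFDerivAt (fun w => ∑ i, f i w)
        (∑ i, InnerProductSpace.toDual ℝ _ (gradient (f i) w)) w :=
      HasFDerivAt.fun_sum (fun i _ => ((hdiff i w).hasGradientAt).hasFDerivAt)
    have hP' : HasFDerivAt P
        ((1 / (n : ℝ)) • ∑ i, InnerProductSpace.toDual ℝ _ (gradient (f i) w)) w := by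
      have h2 := hsum.const_mul (1 / (n : ℝ))
      have hfun : P = fun w => (1 / (n : ℝ)) * ∑ i, f i w := funext hP
      rw [hfun]
      exact h2
    have h3 := hP'.hasGradientAt
    rw [map_smul, map_sum] at h3
    simpa [gradient] using h3
  have hgP : ∀ w, gradient P w = (1 / (n : ℝ)) • ∑ i, gradient (f i) w :=
    fun w => (hgradP w).gradient
  have hPdiff : Differentiable ℝ P := fun w => (hgradP w).differentiableAt
  -- Lipschitz gradient of P
  have hPLip : ∀ a b, ‖gradient P a - gradient P b‖ ≤ L * ‖a - b‖ := by
    intro a b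
    have h1 : gradient P a - gradient P b
        = (1 / (n : ℝ)) • ∑ i, (gradient (f i) a - gradient (f i) b) := by
      rw [hgP, hgP, ← smul_sub, Finset.sum_sub_distrib]
    rw [h1, norm_smul]
    have h2 : ‖∑ i, (gradient (f i) a - gradient (f i) b)‖
        ≤ ∑ i : Fin n, (L * ‖a - b‖) :=
      le_trans (norm_sum_le _ _) (Finset.sum_le_sum fun i _ => hLip i a b)
    have h3 : ∑ i : Fin n, (L * ‖a - b‖) = (n : ℝ) * (L * ‖a - b‖) := by
      rw [Finset.sum_const, Finset.card_univ, Fintype.card_fin]; simp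
    rw [Real.norm_eq_abs, abs_of_pos (by positivity : (0:ℝ) < 1 / (n:ℝ))]
    rw [h3] at h2
    calc 1 / (n:ℝ) * ‖∑ i, (gradient (f i) a - gradient (f i) b)‖
        ≤ 1 / (n:ℝ) * ((n:ℝ) * (L * ‖a - b‖)) :=
          mul_le_mul_of_nonneg_left h2 (by positivity)
    _ = L * ‖a - b‖ := by field_simp
  -- descent lemma
  have hdesc : ∀ x y, P y ≤ P x + ⟪gradient P x, y - x⟫ + L/2 * ‖y - x‖^2 :=
    descent_lemma_aux P L hL.le hPdiff hPLip
  -- μ ≤ L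
  have hμL : μ ≤ L := by
    set y : EuclideanSpace ℝ (Fin d) := EuclideanSpace.single ⟨0, hd⟩ (1:ℝ) with hy
    have hny : ‖y‖ = 1 := by rw [hy, EuclideanSpace.norm_single]; norm_num
    have hmid := hsc.2 (Set.mem_univ (0 : EuclideanSpace ℝ (Fin d))) (Set.mem_univ y)
      (by norm_num : (0:ℝ) ≤ 1/2) (by norm_num : (0:ℝ) ≤ 1/2) (by norm_num)
    have hm : (1/2 : ℝ) • (0 : EuclideanSpace ℝ (Fin d)) + (1/2 : ℝ) • y = (1/2 : ℝ) • y := by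
      simp
    rw [hm] at hmid
    have hny2 : ‖(0 : EuclideanSpace ℝ (Fin d)) - y‖ = 1 := by rw [zero_sub, norm_neg, hny]
    rw [hny2] at hmid
    have hd1 := hdesc ((1/2 : ℝ) • y) 0
    have hd2 := hdesc ((1/2 : ℝ) • y) y
    have e1 : (0 : EuclideanSpace ℝ (Fin d)) - (1/2 : ℝ) • y = -((1/2 : ℝ) • y) := by
      rw [zero_sub]
    have e2 : y - (1/2 : ℝ) • y = (1/2 : ℝ) • y := by
      rw [← one_smul ℝ y, smul_smul, ← sub_smul]; norm_num
    rw [e1] at hd1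
    rw [e2] at hd2
    rw [inner_neg_right] at hd1
    have en : ‖(1/2 : ℝ) • y‖^2 = 1/4 := by
      rw [norm_smul, Real.norm_eq_abs, hny]; norm_num
    rw [norm_neg, en] at hd1
    rw [en] at hd2
    rw [smul_eq_mul, smul_eq_mul] at hmid
    nlinarith [hmid, hd1, hd2]
  ---- FIRST EPOCH: bound ‖vcur - ∇P wcur‖ ≤ (1/7)‖vprev‖
  have hWrecN : ∀ i, i < n → W (i+1) = W i - η • V i := by
    intro i hi; simpa using hWrec ⟨i, hi⟩
  have hstep1 : ∀ i, i < n → ‖V (i+1) - V i‖ ≤ (η * L) * ‖V i‖ := by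
    intro i hi
    have h1 := hVrec ⟨i, hi⟩
    have h2 : V (i+1) - V i
        = gradient (f (π ⟨i, hi⟩)) (W (i+1)) - gradient (f (π ⟨i, hi⟩)) (W i) := by
      simp only [Fin.val_mk] at h1
      rw [h1]; abel
    rw [h2]
    have h3 := hLip (π ⟨i, hi⟩) (W (i+1)) (W i)
    have h4 : W (i+1) - W i = -(η • V i) := by rw [hWrecN i hi]; abel
    have h5 : ‖W (i+1) - W i‖ = η * ‖V i‖ := by
      rw [h4, norm_neg, norm_smul, Real.norm_eq_abs, abs_of_pos hη0]
    rw [h5] at h3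
    calc ‖gradient (f (π ⟨i, hi⟩)) (W (i+1)) - gradient (f (π ⟨i, hi⟩)) (W i)‖
        ≤ L * (η * ‖V i‖) := h3
    _ = (η * L) * ‖V i‖ := by ring
  obtain ⟨Sb1, vb1, _⟩ := sarah_sum_bound n (η * L) (by positivity) hηL V hstep1
  -- extended first-epoch point sequence
  set W1 : ℕ → EuclideanSpace ℝ (Fin d) := fun i => if i = n + 1 then wcur else W i with hW1
  have hW1rec : ∀ i, i ≤ n → W1 (i+1) = W1 i - η • V i := by
    intro i hi
    rcases Nat.lt_or_ge i n with h | h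
    · have e1 : W1 (i+1) = W (i+1) := by
        simp only [hW1]; rw [if_neg (by omega)]
      have e2 : W1 i = W i := by simp only [hW1]; rw [if_neg (by omega)]
      rw [e1, e2]; exact hWrecN i h
    · have hin : i = n := le_antisymm hi h
      subst hin
      have e1 : W1 (i+1) = wcur := by simp [hW1]
      have e2 : W1 i = W i := by simp only [hW1]; rw [if_neg (by omega)]
      rw [e1, e2, hwcur]
  have htele1 : ∀ i, i ≤ n + 1 → W1 0 - W1 i = η • ∑ j ∈ Finset.range i, V j := by
    intro i
    induction i with
    | zero => intro _; simp
    | succ i ih =>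
      intro hi
      have hi' : i ≤ n := Nat.lt_succ_iff.mp hi
      have h1 := ih (le_trans hi' (Nat.le_succ n))
      have h2 : W1 0 - W1 (i+1) = (W1 0 - W1 i) + (η • V i) := by
        rw [hW1rec i hi']; abel
      rw [h2, h1, Finset.sum_range_succ, smul_add]
  have hWtocur : ∀ i : ℕ, i < n → ‖W (i+1) - wcur‖ ≤ η * (n:ℝ) * ((8/7) * ‖vprev‖) := by
    intro i hi
    have e1 : W (i+1) - wcur = W1 (i+1) - W1 (n+1) := by
      have e2 : W1 (i+1) = W (i+1) := by simp only [hW1]; rw [if_neg (by omega)]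
      have e3 : W1 (n+1) = wcur := by simp [hW1]
      rw [e2, e3]
    have e4 : W1 (i+1) - W1 (n+1) = (W1 0 - W1 (n+1)) - (W1 0 - W1 (i+1)) := by abel
    rw [e1, e4, htele1 (n+1) (le_refl _), htele1 (i+1) (by omega), ← smul_sub,
      ← Finset.sum_Ico_eq_sub _ (by omega : i + 1 ≤ n + 1)]
    rw [norm_smul, Real.norm_eq_abs, abs_of_pos hη0]
    have h5 : ‖∑ j ∈ Finset.Ico (i+1) (n+1), V j‖ ≤ ∑ j ∈ Finset.Ico (i+1) (n+1), ‖V j‖ :=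
      norm_sum_le _ _
    have h6 : ∑ j ∈ Finset.Ico (i+1) (n+1), ‖V j‖
        ≤ (Finset.Ico (i+1) (n+1)).card * ((8/7) * ‖vprev‖) := by
      have h6' := Finset.sum_le_card_nsmul (Finset.Ico (i+1) (n+1)) (fun j => ‖V j‖)
        ((8/7) * ‖vprev‖) (fun j hj => by
          rw [Finset.mem_Ico] at hj
          have := vb1 j (by omega)
          rw [hV0] at this
          exact this)
      rw [nsmul_eq_mul] at h6'
      exact h6'
    have h7 : ((Finset.Ico (i+1) (n+1)).card : ℝ) ≤ (n:ℝ) := by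
      rw [Nat.card_Ico]
      have : n + 1 - (i + 1) ≤ n := by omega
      exact_mod_cast this
    have h8 : (0:ℝ) ≤ (8/7) * ‖vprev‖ := by positivity
    calc η * ‖∑ j ∈ Finset.Ico (i+1) (n+1), V j‖
        ≤ η * ((Finset.Ico (i+1) (n+1)).card * ((8/7) * ‖vprev‖)) := by
          apply mul_le_mul_of_nonneg_left _ hη0.le
          exact le_trans h5 h6
    _ ≤ η * ((n:ℝ) * ((8/7) * ‖vprev‖)) := by
          apply mul_le_mul_of_nonneg_left _ hη0.le
          exact mul_le_mul_of_nonneg_right h7 h8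
    _ = η * (n:ℝ) * ((8/7) * ‖vprev‖) := by ring
  have hE0 : ‖vcur - gradient P wcur‖ ≤ (1/7) * ‖vprev‖ := by
    have hgw : gradient P wcur
        = (1 / (n : ℝ)) • ∑ i : Fin n, gradient (f (π i)) wcur := by
      rw [hgP]
      congr 1
      exact (Equiv.sum_comp π (fun j => gradient (f j) wcur)).symm
    have h1 : vcur - gradient P wcur
        = (1 / (n : ℝ)) • ∑ i : Fin n,
            (gradient (f (π i)) (W ((i:ℕ)+1)) - gradient (f (π i)) wcur) := by
      rw [hvcur, hgw, ← smul_sub, Finset.sum_sub_distrib]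
    rw [h1, norm_smul, Real.norm_eq_abs, abs_of_pos (by positivity : (0:ℝ) < 1/(n:ℝ))]
    have h2 : ‖∑ i : Fin n, (gradient (f (π i)) (W ((i:ℕ)+1)) - gradient (f (π i)) wcur)‖
        ≤ ∑ i : Fin n, (L * (η * (n:ℝ) * ((8/7) * ‖vprev‖))) := by
      refine le_trans (norm_sum_le _ _) (Finset.sum_le_sum fun i _ => ?_)
      refine le_trans (hLip (π i) _ _) ?_
      exact mul_le_mul_of_nonneg_left (hWtocur i i.isLt) hL.le
    have h3 : ∑ i : Fin n, (L * (η * (n:ℝ) * ((8/7) * ‖vprev‖)))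
        = (n:ℝ) * (L * (η * (n:ℝ) * ((8/7) * ‖vprev‖))) := by
      rw [Finset.sum_const, Finset.card_univ, Fintype.card_fin]; simp
    rw [h3] at h2
    have h4 : 1/(n:ℝ) * ((n:ℝ) * (L * (η * (n:ℝ) * ((8/7) * ‖vprev‖))))
        = (η * L * (n:ℝ)) * ((8/7) * ‖vprev‖) := by field_simp
    have h5 : (η * L * (n:ℝ)) * ((8/7) * ‖vprev‖) ≤ (1/8) * ((8/7) * ‖vprev‖) :=
      mul_le_mul_of_nonneg_right hηL (by positivity)
    calc 1/(n:ℝ) * ‖∑ i : Fin n, (gradient (f (π i)) (W ((i:ℕ)+1)) - gradient (f (π i)) wcur)‖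
        ≤ 1/(n:ℝ) * ((n:ℝ) * (L * (η * (n:ℝ) * ((8/7) * ‖vprev‖)))) :=
          mul_le_mul_of_nonneg_left h2 (by positivity)
    _ = (η * L * (n:ℝ)) * ((8/7) * ‖vprev‖) := h4
    _ ≤ (1/8) * ((8/7) * ‖vprev‖) := h5
    _ = (1/7) * ‖vprev‖ := by ring
  ---- SECOND EPOCH
  set W2 : ℕ → EuclideanSpace ℝ (Fin d) := fun i => if i = n + 1 then wnext else W' i with hW2
  have hW'recN : ∀ i, i < n → W' (i+1) = W' i - η • V' i := by
    intro i hi; simpa using hW'rec ⟨i, hi⟩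
  have hW2rec : ∀ i, i ≤ n → W2 (i+1) = W2 i - η • V' i := by
    intro i hi
    rcases Nat.lt_or_ge i n with h | h
    · have e1 : W2 (i+1) = W' (i+1) := by simp only [hW2]; rw [if_neg (by omega)]
      have e2 : W2 i = W' i := by simp only [hW2]; rw [if_neg (by omega)]
      rw [e1, e2]; exact hW'recN i h
    · have hin : i = n := le_antisymm hi h
      subst hin
      have e1 : W2 (i+1) = wnext := by simp [hW2]
      have e2 : W2 i = W' i := by simp only [hW2]; rw [if_neg (by omega)]
      rw [e1, e2, hwnext]
  have hV'LipN : ∀ i, i < n → ‖V' (i+1) - V' i‖ ≤ L * ‖W2 (i+1) - W2 i‖ := by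
    intro i hi
    have e1 : W2 (i+1) = W' (i+1) := by simp only [hW2]; rw [if_neg (by omega)]
    have e2 : W2 i = W' i := by simp only [hW2]; rw [if_neg (by omega)]
    rw [e1, e2]
    have h1 := hV'rec ⟨i, hi⟩
    simp only [Fin.val_mk] at h1
    have h2 : V' (i+1) - V' i
        = gradient (f (π' ⟨i, hi⟩)) (W' (i+1)) - gradient (f (π' ⟨i, hi⟩)) (W' i) := by
      rw [h1]; abel
    rw [h2]
    exact hLip (π' ⟨i, hi⟩) _ _
  have hV'simN : ∀ i, i < n →
      ‖(V' (i+1) - V' i) - (gradient P (W2 (i+1)) - gradient P (W2 i))‖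
        ≤ (δ/2) * ‖W2 (i+1) - W2 i‖ := by
    intro i hi
    have e1 : W2 (i+1) = W' (i+1) := by simp only [hW2]; rw [if_neg (by omega)]
    have e2 : W2 i = W' i := by simp only [hW2]; rw [if_neg (by omega)]
    rw [e1, e2]
    have h1 := hV'rec ⟨i, hi⟩
    simp only [Fin.val_mk] at h1
    have h2 : (V' (i+1) - V' i) - (gradient P (W' (i+1)) - gradient P (W' i))
        = (gradient (f (π' ⟨i, hi⟩)) (W' (i+1)) - gradient P (W' (i+1)))
          - (gradient (f (π' ⟨i, hi⟩)) (W' i) - gradient P (W' i)) := by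
      rw [h1]; abel
    rw [h2]
    exact hsim (π' ⟨i, hi⟩) _ _
  have hepoch := sarah_epoch_descent n hn η L δ hη0 hL hδ hηL hηδ P (gradient P)
    hdesc hPLip W2 V' hW2rec hV'LipN hV'simN
  have e20 : W2 0 = wcur := by
    simp only [hW2]; rw [if_neg (by omega)]; exact hW'0
  have e2n : W2 (n+1) = wnext := by simp [hW2]
  rw [e20, e2n, hV'0] at hepoch
  ---- final assembly
  have hμη : η * μ * ((n:ℝ)+1) / 2 ≤ 1/8 := by
    have h1 : η * μ * ((n:ℝ)+1) ≤ η * L * ((n:ℝ)+1) := by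
      apply mul_le_mul_of_nonneg_right _ (by positivity)
      exact mul_le_mul_of_nonneg_left hμL hη0.le
    have h2 : η * L * ((n:ℝ)+1) ≤ η * L * (2*(n:ℝ)) := by
      apply mul_le_mul_of_nonneg_left _ (by positivity)
      linarith
    nlinarith [mul_pos hη0 hL]
  have hE0sq : ‖vcur - gradient P wcur‖^2 ≤ (1/49) * ‖vprev‖^2 := by
    nlinarith [hE0, norm_nonneg (vcur - gradient P wcur), norm_nonneg vprev]
  have hGsq : (0:ℝ) ≤ ‖vcur‖^2 := sq_nonneg _
  have hBsq : (0:ℝ) ≤ ‖vprev‖^2 := sq_nonneg _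
  have hc1 : (0:ℝ) < η * ((n:ℝ)+1) := by positivity
  -- key scalar inequality
  have hkey : (1/16) * ‖vcur‖^2 + ‖vcur - gradient P wcur‖^2 - (15/49) * ‖vcur‖^2
      ≤ (1 - η * μ * ((n:ℝ)+1)/2) * (1/16) * ‖vprev‖^2 := by
    linarith [hE0sq, hGsq, hBsq, mul_le_mul_of_nonneg_right hμη hBsq]
  have hkey2 := mul_le_mul_of_nonneg_left hkey hc1.le
  linarith [hepoch, hkey2]
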